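/- Let n ≥ 1, let L ⊂ ℝⁿ be a convex symmetric body with Minkowski functional ‖x‖_L = min{λ > 0 : x ∈ λL}, let φ : [0,∞) → [0,∞) be an increasing, convex, non-constant function, and let μ be the probability measure with density x ↦ e^{-φ(‖x‖_L)}. Then for every R > 0, limsup_{t→∞} ln(μ((tRL)^c)) / φ(tR) = -1. -/

import Mathlib

open MeasureTheory Filter Set Pointwise

lemma expbd13 (c : ℝ) (hc : 0 < c) (m : ℕ) :
    ∃ C : ℝ, 0 < C ∧ ∀ u : ℝ, 0 ≤ u → (1+u)^m * Real.exp (-(c*u)) ≤ C := by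
  have h0 := Real.tendsto_pow_mul_exp_neg_atTop_nhds_zero m
  have h1 : Tendsto (fun u : ℝ => c*(1+u)) atTop atTop := by
    apply Filter.Tendsto.const_mul_atTop hc
    exact tendsto_atTop_add_const_left _ 1 tendsto_id
  have h2 : Tendsto (fun u : ℝ => (c*(1+u))^m * Real.exp (-(c*(1+u)))) atTop (nhds 0) :=
    h0.comp h1
  have h3 : Tendsto (fun u : ℝ => (1+u)^m * Real.exp (-(c*u))) atTop (nhds 0) := by
    have h4 := h2.mul_const (Real.exp c / c^m)
    rw [zero_mul] at h4
    apply h4.congr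
    intro u
    have he : Real.exp (-(c*(1+u))) = Real.exp (-(c*u)) * Real.exp (-c) := by
      rw [← Real.exp_add]; ring_nf
    have h5 : Real.exp (-c) * Real.exp c = 1 := by rw [← Real.exp_add]; simp
    rw [he, mul_pow]
    field_simp
    linear_combination ((1+u)^m) * h5
  obtain ⟨M, hM⟩ := eventually_atTop.1 (h3.eventually (eventually_le_nhds (by norm_num : (0:ℝ) < 1)))
  have hcont : ContinuousOn (fun u : ℝ => (1+u)^m * Real.exp (-(c*u))) (Set.Icc 0 (max M 0)) := by
    apply Continuous.continuousOn; fun_prop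
  obtain ⟨C, hC⟩ := (isCompact_Icc (a := (0:ℝ)) (b := max M 0)).exists_bound_of_continuousOn hcont
  refine ⟨max C 1 + 1, by nlinarith [le_max_right C 1], ?_⟩
  intro u hu
  rcases le_or_gt u (max M 0) with h|h
  · have h6 := hC u ⟨hu, h⟩
    rw [Real.norm_eq_abs] at h6
    have h7 := le_abs_self ((1+u)^m * Real.exp (-(c*u)))
    nlinarith [le_max_left C 1]
  · have := hM u (le_trans (le_max_left M 0) h.le)
    nlinarith [le_max_right C 1]


lemma freq13 (φ : ℝ → ℝ) (hmono : MonotoneOn φ (Set.Ici 0))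
    (hφtop : Filter.Tendsto φ Filter.atTop Filter.atTop) {ε : ℝ} (hε : 0 < ε) (s₀ : ℝ) :
    ∃ s : ℝ, s₀ ≤ s ∧ 0 ≤ s ∧ φ (s + Real.exp (-(ε * φ s))) ≤ (1 + ε) * φ s := by
  by_contra hcon
  push_neg at hcon
  set A := max 1 (Real.log 2 / ε^2) with hA
  have hA1 : (1:ℝ) ≤ A := le_max_left _ _
  have hA2 : Real.log 2 ≤ ε^2 * A := by
    have h := le_max_right 1 (Real.log 2 / ε^2)
    rw [div_le_iff₀ (by positivity)] at h
    nlinarith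
  obtain ⟨s₁, hφs₁, hs₁'⟩ :=
    ((hφtop.eventually_ge_atTop A).and (eventually_ge_atTop (max s₀ 0))).exists
  set c : ℕ → ℝ := fun k => Nat.rec (motive := fun _ => ℝ) s₁
    (fun _ x => x + Real.exp (-(ε * φ x))) k with hc
  have hck : ∀ k, c (k+1) = c k + Real.exp (-(ε * φ (c k))) := fun k => rfl
  have hlog2 : (0:ℝ) ≤ Real.log 2 := Real.log_nonneg one_le_two
  have main : ∀ k, s₁ ≤ c k ∧ c k ≤ s₁ + 2 - 2*(1/2)^k ∧ (1+ε)^k * A ≤ φ (c k) := by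
    intro k; induction k with
    | zero =>
      have hc0 : c 0 = s₁ := rfl
      refine ⟨by rw [hc0], by rw [hc0]; norm_num, by rw [hc0]; simpa using hφs₁⟩
    | succ k ih =>
      obtain ⟨ih1, ih2, ih3⟩ := ih
      have hck0 : (0:ℝ) ≤ c k := le_trans (le_trans (le_max_right s₀ 0) hs₁') ih1
      have hcs₀ : s₀ ≤ c k := le_trans (le_trans (le_max_left s₀ 0) hs₁') ih1
      have hexp : Real.exp (-(ε * φ (c k))) ≤ (1/2)^k := by
        have h1 : (1:ℝ) + (k:ℝ)*ε ≤ (1+ε)^k := one_add_mul_le_pow (by linarith) k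
        have h2 : (k:ℝ) * Real.log 2 ≤ ε * φ (c k) := by
          have h3 : ε*((1+ε)^k * A) ≤ ε * φ (c k) := mul_le_mul_of_nonneg_left ih3 hε.le
          have h4 : ε*A*(1+(k:ℝ)*ε) ≤ ε*A*(1+ε)^k :=
            mul_le_mul_of_nonneg_left h1 (by positivity)
          have h5 : (k:ℝ) * Real.log 2 ≤ (k:ℝ) * (ε^2*A) :=
            mul_le_mul_of_nonneg_left hA2 (Nat.cast_nonneg k)
          nlinarith [Nat.cast_nonneg (α := ℝ) k]
        calc Real.exp (-(ε*φ (c k))) ≤ Real.exp (-((k:ℝ)*Real.log 2)) := by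
              apply Real.exp_le_exp.2; linarith
          _ = (1/2)^k := by
              rw [show -((k:ℝ)*Real.log 2) = Real.log ((1/2:ℝ)^k) by
                rw [Real.log_pow, one_div, Real.log_inv]; ring]
              exact Real.exp_log (by positivity)
      have hexp0 := Real.exp_pos (-(ε * φ (c k)))
      refine ⟨?_, ?_, ?_⟩
      · rw [hck]; linarith
      · rw [hck, pow_succ]
        have hp : (1/2:ℝ)^(k+1) = (1/2)^k * (1/2) := pow_succ _ _
        nlinarith
      · have hstep := hcon (c k) hcs₀ hck0
        rw [hck]
        calc (1+ε)^(k+1)*A = (1+ε)*((1+ε)^k*A) := by ring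
          _ ≤ (1+ε)*φ (c k) := mul_le_mul_of_nonneg_left ih3 (by linarith)
          _ ≤ φ (c k + Real.exp (-(ε*φ (c k)))) := hstep.le
  obtain ⟨k, hk⟩ := pow_unbounded_of_one_lt (φ (s₁ + 2)) (show (1:ℝ) < 1+ε by linarith)
  obtain ⟨m1, m2, m3⟩ := main k
  have hck0 : (0:ℝ) ≤ c k := le_trans (le_trans (le_max_right s₀ 0) hs₁') m1
  have h6 : φ (c k) ≤ φ (s₁+2) := by
    apply hmono (Set.mem_Ici.2 hck0) (Set.mem_Ici.2 (by linarith [le_max_right s₀ 0, hs₁']))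
    nlinarith [pow_pos (show (0:ℝ) < 1/2 by norm_num) k]
  nlinarith [pow_pos (show (0:ℝ) < 1+ε by linarith) k]


set_option maxHeartbeats 4000000 in
theorem stmt13 (n : ℕ) (hn : 1 ≤ n)
    (L : Set (EuclideanSpace ℝ (Fin n)))
    (hLcomp : IsCompact L) (hLconv : Convex ℝ L)
    (hLint : (interior L).Nonempty) (hLsymm : L = -L)
    (φ : ℝ → ℝ)
    (hmono : MonotoneOn φ (Set.Ici 0))
    (hconv : ConvexOn ℝ (Set.Ici 0) φ)
    (hnonneg : ∀ t ∈ Set.Ici (0 : ℝ), 0 ≤ φ t)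
    (hnc : ∃ s t : ℝ, 0 ≤ s ∧ 0 ≤ t ∧ φ s ≠ φ t)
    (μ : Measure (EuclideanSpace ℝ (Fin n)))
    (hμ : μ = volume.withDensity fun x => ENNReal.ofReal (Real.exp (-φ (gauge L x))))
    (hprob : IsProbabilityMeasure μ)
    (R : ℝ) (hR : 0 < R) :
    Filter.limsup
      (fun t => Real.log (μ ((t * R) • L)ᶜ).toReal / φ (t * R))
      Filter.atTop = -1 := by
  classical
  -- 0 is in the interior of L
  obtain ⟨x₀, hx₀⟩ := hLint
  have hIntNeg : -x₀ ∈ interior L := by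
    have hsub : -interior L ⊆ L := by
      intro y hy
      rw [Set.mem_neg] at hy
      rw [hLsymm, Set.mem_neg]
      exact interior_subset hy
    have hopen : IsOpen (-interior L) := isOpen_interior.neg
    exact interior_maximal hsub hopen (Set.neg_mem_neg.2 hx₀)
  have h0L : (0 : EuclideanSpace ℝ (Fin n)) ∈ interior L := by
    have h := hLconv.interior hx₀ hIntNeg (by norm_num : (0:ℝ) ≤ 1/2)
      (by norm_num : (0:ℝ) ≤ 1/2) (by norm_num)
    simpa [smul_neg] using h
  have hLnhds : L ∈ nhds (0 : EuclideanSpace ℝ (Fin n)) :=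
    mem_interior_iff_mem_nhds.1 h0L
  have habs : Absorbent ℝ L := absorbent_nhds_zero hLnhds
  have hclosed : IsClosed L := hLcomp.isClosed
  -- membership characterization
  have memIff : ∀ {a : ℝ}, 0 < a → ∀ x, x ∈ a • L ↔ gauge L x ≤ a := by
    intro a ha x
    constructor
    · exact gauge_le_of_mem ha.le
    · intro h
      have h1 : gauge L (a⁻¹ • x) ≤ 1 := by
        rw [gauge_smul_of_nonneg (inv_nonneg.2 ha.le), smul_eq_mul]
        have := mul_le_mul_of_nonneg_left h (inv_nonneg.2 ha.le)
        rwa [inv_mul_cancel₀ ha.ne'] at this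
      have h2 : a⁻¹ • x ∈ L := by
        have := (gauge_le_one_iff_mem_closure hLconv hLnhds).1 h1
        rwa [hclosed.closure_eq] at this
      have h3 := Set.smul_mem_smul_set (a := a) h2
      rwa [smul_inv_smul₀ ha.ne'] at h3
  -- measurability of the density
  have hgc : Continuous (gauge L) := continuous_gauge hLconv hLnhds
  have hfm : Measurable fun x : EuclideanSpace ℝ (Fin n) =>
      ENNReal.ofReal (Real.exp (-φ (gauge L x))) := by
    have hψ : Measurable fun u : ℝ => φ (max u 0) := by
      have hm : Monotone fun u : ℝ => φ (max u 0) := fun u v huv =>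
        hmono (Set.mem_Ici.2 (le_max_right u 0)) (Set.mem_Ici.2 (le_max_right v 0))
          (max_le_max huv le_rfl)
      exact hm.measurable
    have heq : (fun x : EuclideanSpace ℝ (Fin n) => ENNReal.ofReal (Real.exp (-φ (gauge L x))))
        = fun x => ENNReal.ofReal (Real.exp (-φ (max (gauge L x) 0))) := by
      funext x; rw [max_eq_left (gauge_nonneg x)]
    rw [heq]
    exact (Real.measurable_exp.comp (hψ.comp hgc.measurable).neg).ennreal_ofReal
  have hμapp : ∀ {A : Set (EuclideanSpace ℝ (Fin n))}, MeasurableSet A →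
      μ A = ∫⁻ x in A, ENNReal.ofReal (Real.exp (-φ (gauge L x))) := by
    intro A hA
    rw [hμ, withDensity_apply _ hA]
  -- smul sets
  have hcompS : ∀ s : ℝ, IsCompact (s • L) := by
    intro s
    have : s • L = (fun x => s • x) '' L := by simp [Set.image_smul]
    rw [this]
    exact hLcomp.image (continuous_const_smul s)
  have hmeasS : ∀ s : ℝ, MeasurableSet (s • L) := fun s =>
    (hcompS s).isClosed.measurableSet
  have hvol : ∀ s : ℝ, 0 ≤ s → volume (s • L) = ENNReal.ofReal (s^n) * volume L := by
    intro s hs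
    rw [Measure.addHaar_smul_of_nonneg volume hs L, finrank_euclideanSpace_fin]
  have hvolpos : 0 < volume L := Measure.measure_pos_of_nonempty_interior _ ⟨x₀, hx₀⟩
  have hvolne : volume L ≠ ⊤ := hLcomp.measure_lt_top.ne
  set V : ℝ := (volume L).toReal with hVdef
  have hV : 0 < V := ENNReal.toReal_pos hvolpos.ne' hvolne
  -- slope data
  have hexn : ∃ p q : ℝ, 0 ≤ p ∧ p < q ∧ φ p < φ q := by
    obtain ⟨s0, t0, hs0, ht0, hne⟩ := hnc
    rcases lt_trichotomy s0 t0 with h|h|h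
    · exact ⟨s0, t0, hs0, h, lt_of_le_of_ne (hmono hs0 ht0 h.le) hne⟩
    · exact absurd (by rw [h]) hne
    · exact ⟨t0, s0, ht0, h, lt_of_le_of_ne (hmono ht0 hs0 h.le) (Ne.symm hne)⟩
  obtain ⟨p, q, hp0, hpq, hφpq⟩ := hexn
  set a : ℝ := (φ q - φ p)/(q - p) with ha_def
  have ha : 0 < a := div_pos (sub_pos.2 hφpq) (sub_pos.2 hpq)
  have hq0 : (0:ℝ) ≤ q := hp0.trans hpq.le
  have key : ∀ u v : ℝ, q ≤ u → u ≤ v → φ u + a * (v - u) ≤ φ v := by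
    intro u v hqu huv
    rcases eq_or_lt_of_le huv with rfl|huv
    · simp
    have hu0 : (0:ℝ) ≤ u := hq0.trans hqu
    have hv0 : (0:ℝ) ≤ v := hu0.trans huv.le
    have hpu : p < u := hpq.trans_le hqu
    have hpv : p < v := hpu.trans huv
    have h1 : (φ q - φ p)/(q - p) ≤ (φ v - φ p)/(v - p) :=
      hconv.secant_mono (Set.mem_Ici.2 hp0) (Set.mem_Ici.2 hq0) (Set.mem_Ici.2 hv0)
        hpq.ne' hpv.ne' (hqu.trans huv.le)
    have h2 : (φ p - φ v)/(p - v) ≤ (φ u - φ v)/(u - v) :=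
      hconv.secant_mono (Set.mem_Ici.2 hv0) (Set.mem_Ici.2 hp0) (Set.mem_Ici.2 hu0)
        hpv.ne huv.ne hpu.le
    have e1 : (φ p - φ v)/(p - v) = (φ v - φ p)/(v - p) := by
      rw [← neg_sub (φ v) (φ p), ← neg_sub v p, neg_div_neg_eq]
    have e2 : (φ u - φ v)/(u - v) = (φ v - φ u)/(v - u) := by
      rw [← neg_sub (φ v) (φ u), ← neg_sub v u, neg_div_neg_eq]
    rw [e1, e2] at h2
    have h3 : a ≤ (φ v - φ u)/(v - u) := le_trans h1 h2
    have h4 : a * (v - u) ≤ φ v - φ u := by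
      rw [← le_div_iff₀ (sub_pos.2 huv)]
      exact h3
    linarith
  have hφtop : Tendsto φ atTop atTop := by
    apply tendsto_atTop_mono' atTop
      (show ∀ᶠ v in atTop, φ q + a*(v - q) ≤ φ v from
        (eventually_ge_atTop q).mono (fun v hv => key q v le_rfl hv))
    apply tendsto_atTop_add_const_left
    apply Filter.Tendsto.const_mul_atTop ha
    exact (tendsto_atTop_add_const_right atTop (-q) tendsto_id).congr (fun x => by simp only [id]; ring)
  have htRtop : Tendsto (fun t : ℝ => t*R) atTop atTop :=
    Tendsto.atTop_mul_const hR tendsto_id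
  have hφtR : Tendsto (fun t : ℝ => φ (t*R)) atTop atTop := hφtop.comp htRtop
  -- finiteness of the exponential integral
  have hIfin : ∀ c : ℝ, 0 < c →
      (∫⁻ x : EuclideanSpace ℝ (Fin n), ENNReal.ofReal (Real.exp (-(c*‖x‖)))) < ⊤ := by
    intro c hc
    obtain ⟨C, hC0, hCb⟩ := expbd13 c hc (n+1)
    have hint : Integrable (fun x : EuclideanSpace ℝ (Fin n) => C * (1+‖x‖)^(-((n:ℝ)+1))) := by
      apply Integrable.const_mul
      apply integrable_one_add_norm
      rw [finrank_euclideanSpace_fin]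
      linarith
    have hint2 : Integrable (fun x : EuclideanSpace ℝ (Fin n) => Real.exp (-(c*‖x‖))) := by
      apply hint.mono'
      · exact (Real.continuous_exp.comp (continuous_const.mul continuous_norm : Continuous fun x : EuclideanSpace ℝ (Fin n) => c * ‖x‖).neg).aestronglyMeasurable
      · filter_upwards with x
        rw [Real.norm_eq_abs, Real.abs_exp]
        have h1 := hCb ‖x‖ (norm_nonneg x)
        have h2 : (0:ℝ) < 1 + ‖x‖ := by positivity
        have h3 : (0:ℝ) < (1+‖x‖)^(n+1) := by positivity
        rw [Real.rpow_neg h2.le,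
          show ((n:ℝ)+1) = ((n+1 : ℕ):ℝ) by push_cast; ring, Real.rpow_natCast]
        have h4 : Real.exp (-(c*‖x‖)) * (1+‖x‖)^(n+1) ≤ C := by nlinarith [h1]
        calc Real.exp (-(c*‖x‖))
            = Real.exp (-(c*‖x‖)) * (1+‖x‖)^(n+1) * ((1+‖x‖)^(n+1))⁻¹ := by field_simp
          _ ≤ C * ((1+‖x‖)^(n+1))⁻¹ :=
              mul_le_mul_of_nonneg_right h4 (inv_nonneg.2 h3.le)
    exact hint2.lintegral_lt_top
  -- upper bound
  have hupper : ∀ θ : ℝ, 0 < θ → θ < 1 → ∃ K : ℝ, 0 < K ∧ ∀ s : ℝ, max q 1 ≤ s →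
      μ ((s • L)ᶜ) ≤ ENNReal.ofReal (K * Real.exp (-((1-θ) * φ s))) := by
    intro θ hθ0 hθ1
    obtain ⟨r, hr1, hLr⟩ := hLcomp.isBounded.subset_ball_lt 0 0
    set c : ℝ := θ * a / r with hc_def
    have hc : 0 < c := div_pos (mul_pos hθ0 ha) hr1
    have hI := hIfin c hc
    set Ir : ℝ := (∫⁻ x : EuclideanSpace ℝ (Fin n),
      ENNReal.ofReal (Real.exp (-(c*‖x‖)))).toReal with hIr_def
    have hIeq : (∫⁻ x : EuclideanSpace ℝ (Fin n), ENNReal.ofReal (Real.exp (-(c*‖x‖))))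
        = ENNReal.ofReal Ir := (ENNReal.ofReal_toReal hI.ne).symm
    have hIr0 : 0 ≤ Ir := ENNReal.toReal_nonneg
    refine ⟨(Ir + 1) * Real.exp (θ * a * q), by positivity, ?_⟩
    intro s hs
    have hs1 : (1:ℝ) ≤ s := le_trans (le_max_right _ _) hs
    have hsq : q ≤ s := le_trans (le_max_left _ _) hs
    have hs0 : 0 < s := lt_of_lt_of_le one_pos hs1
    have hφs0 : 0 ≤ φ s := hnonneg s (Set.mem_Ici.2 hs0.le)
    have meas2 : Measurable fun x : EuclideanSpace ℝ (Fin n) =>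
        ENNReal.ofReal (Real.exp (-((1-θ)*φ s) + θ*a*q) * Real.exp (-(c * ‖x‖))) := by
      apply Measurable.ennreal_ofReal
      apply Measurable.const_mul
      exact (Real.continuous_exp.comp
        ((continuous_const.mul continuous_norm :
          Continuous fun x : EuclideanSpace ℝ (Fin n) => c * ‖x‖).neg)).measurable
    have hpt : ∀ x ∈ (s • L)ᶜ, ENNReal.ofReal (Real.exp (-φ (gauge L x))) ≤
        ENNReal.ofReal (Real.exp (-((1-θ)*φ s) + θ*a*q) * Real.exp (-(c * ‖x‖))) := by
      intro x hx
      rw [Set.mem_compl_iff] at hx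
      have hg : s < gauge L x := lt_of_not_ge (fun h => hx ((memIff hs0 x).2 h))
      have hg0 : (0:ℝ) ≤ gauge L x := gauge_nonneg x
      have hφs : φ s ≤ φ (gauge L x) := hmono (Set.mem_Ici.2 hs0.le) (Set.mem_Ici.2 hg0) hg.le
      have hlin : φ q + a * (gauge L x - q) ≤ φ (gauge L x) :=
        key q (gauge L x) le_rfl (hsq.trans hg.le)
      have hφq0 : 0 ≤ φ q := hnonneg q (Set.mem_Ici.2 hq0)
      have hnorm : c * ‖x‖ ≤ θ * a * gauge L x := by
        have hgb := gauge_mono habs hLr x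
        rw [gauge_ball hr1.le] at hgb
        have h9 := mul_le_mul_of_nonneg_left hgb (by positivity : (0:ℝ) ≤ θ * a)
        calc c * ‖x‖ = θ * a * (‖x‖ / r) := by rw [hc_def]; field_simp
          _ ≤ θ * a * gauge L x := h9
      apply ENNReal.ofReal_le_ofReal
      rw [← Real.exp_add]
      apply Real.exp_le_exp.2
      have e1 : (1-θ)*φ s ≤ (1-θ)*φ (gauge L x) := mul_le_mul_of_nonneg_left hφs (by linarith)
      have e2' : θ*(a*(gauge L x - q)) ≤ θ*(φ (gauge L x)) :=
        mul_le_mul_of_nonneg_left (by linarith) hθ0.le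
      nlinarith [e1, e2', hnorm]
    calc μ ((s • L)ᶜ)
        = ∫⁻ x in (s • L)ᶜ, ENNReal.ofReal (Real.exp (-φ (gauge L x))) :=
          hμapp (hmeasS s).compl
      _ ≤ ∫⁻ x in (s • L)ᶜ,
            ENNReal.ofReal (Real.exp (-((1-θ)*φ s) + θ*a*q) * Real.exp (-(c * ‖x‖))) :=
          setLIntegral_mono meas2 hpt
      _ ≤ ∫⁻ x, ENNReal.ofReal (Real.exp (-((1-θ)*φ s) + θ*a*q) * Real.exp (-(c * ‖x‖))) :=
          setLIntegral_le_lintegral _ _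
      _ = ENNReal.ofReal (Real.exp (-((1-θ)*φ s) + θ*a*q)) *
            ∫⁻ x, ENNReal.ofReal (Real.exp (-(c * ‖x‖))) := by
          simp_rw [ENNReal.ofReal_mul (Real.exp_pos _).le]
          exact lintegral_const_mul' _ _ ENNReal.ofReal_ne_top
      _ ≤ ENNReal.ofReal ((Ir + 1) * Real.exp (θ * a * q) * Real.exp (-((1-θ) * φ s))) := by
          rw [hIeq, ← ENNReal.ofReal_mul (Real.exp_pos _).le]
          apply ENNReal.ofReal_le_ofReal
          rw [Real.exp_add]
          nlinarith [Real.exp_pos (-((1-θ)*φ s)), Real.exp_pos (θ*a*q), hIr0]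
  -- annulus lower bound
  have hann : ∀ s δ : ℝ, 0 < s → 0 < δ →
      ENNReal.ofReal (Real.exp (-(φ (s+δ))) * δ^n) * volume L ≤ μ ((s • L)ᶜ) := by
    intro s δ hs hδ
    have hsδ : 0 < s + δ := by linarith
    have hsub2 : s • L ⊆ (s+δ) • L := by
      intro x hx
      exact (memIff hsδ x).2 ((gauge_le_of_mem hs.le hx).trans (by linarith))
    have hAsub : ((s+δ) • L) \ (s • L) ⊆ (s • L)ᶜ := fun x hx => hx.2
    have hvolA : volume (((s+δ) • L) \ (s • L))
        = (ENNReal.ofReal ((s+δ)^n) - ENNReal.ofReal (s^n)) * volume L := by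
      rw [measure_diff hsub2 (hmeasS s).nullMeasurableSet (hcompS s).measure_lt_top.ne,
        hvol _ hsδ.le, hvol _ hs.le, ENNReal.sub_mul (fun _ _ => hvolne)]
    have hpow : s^n + δ^n ≤ (s+δ)^n := pow_add_pow_le hs.le hδ.le (by omega)
    have hvolA2 : ENNReal.ofReal (δ^n) * volume L ≤ volume (((s+δ) • L) \ (s • L)) := by
      rw [hvolA, ← ENNReal.ofReal_sub _ (pow_nonneg hs.le n)]
      exact mul_le_mul_left (ENNReal.ofReal_le_ofReal (by linarith)) _
    have hpt : ∀ x ∈ ((s+δ) • L) \ (s • L),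
        ENNReal.ofReal (Real.exp (-(φ (s+δ)))) ≤ ENNReal.ofReal (Real.exp (-φ (gauge L x))) := by
      intro x hx
      have hg : gauge L x ≤ s + δ := (memIff hsδ x).1 hx.1
      have hφg : φ (gauge L x) ≤ φ (s+δ) :=
        hmono (Set.mem_Ici.2 (gauge_nonneg x)) (Set.mem_Ici.2 hsδ.le) hg
      exact ENNReal.ofReal_le_ofReal (Real.exp_le_exp.2 (by linarith))
    calc ENNReal.ofReal (Real.exp (-(φ (s+δ))) * δ^n) * volume L
        = ENNReal.ofReal (Real.exp (-(φ (s+δ)))) * (ENNReal.ofReal (δ^n) * volume L) := by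
          rw [ENNReal.ofReal_mul (Real.exp_pos _).le, mul_assoc]
      _ ≤ ENNReal.ofReal (Real.exp (-(φ (s+δ)))) * volume (((s+δ) • L) \ (s • L)) :=
          mul_le_mul_right hvolA2 _
      _ = ∫⁻ _ in ((s+δ) • L) \ (s • L), ENNReal.ofReal (Real.exp (-(φ (s+δ)))) :=
          (setLIntegral_const _ _).symm
      _ ≤ ∫⁻ x in ((s+δ) • L) \ (s • L), ENNReal.ofReal (Real.exp (-φ (gauge L x))) :=
          setLIntegral_mono hfm hpt
      _ ≤ ∫⁻ x in (s • L)ᶜ, ENNReal.ofReal (Real.exp (-φ (gauge L x))) :=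
          lintegral_mono_set hAsub
      _ = μ ((s • L)ᶜ) := (hμapp (hmeasS s).compl).symm
  have hne_top : ∀ s : ℝ, μ ((s • L)ᶜ) ≠ ⊤ := fun s => (measure_lt_top μ _).ne
  have hpos : ∀ s : ℝ, 0 < s → 0 < μ ((s • L)ᶜ) := by
    intro s hs
    refine lt_of_lt_of_le ?_ (hann s 1 hs one_pos)
    exact ENNReal.mul_pos (by simp [ENNReal.ofReal_pos]; positivity) hvolpos.ne'
  have hMpos : ∀ s : ℝ, 0 < s → 0 < (μ ((s • L)ᶜ)).toReal := fun s hs =>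
    ENNReal.toReal_pos (hpos s hs).ne' (hne_top s)
  -- Part A
  have hA : ∀ ε : ℝ, 0 < ε → ε < 1 → ∀ᶠ t in atTop,
      Real.log (μ ((t * R) • L)ᶜ).toReal / φ (t * R) ≤ -1 + ε := by
    intro ε hε hε1
    obtain ⟨K, hK, hKb⟩ := hupper (ε/2) (by linarith) (by linarith)
    have h1 : ∀ᶠ t in atTop, max q 1 ≤ t*R := htRtop.eventually (eventually_ge_atTop _)
    have h2 : ∀ᶠ t in atTop, max 1 (2*|Real.log K|/ε) ≤ φ (t*R) :=
      hφtR.eventually (eventually_ge_atTop _)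
    filter_upwards [h1, h2] with t ht1 ht2
    have hφpos : 0 < φ (t*R) := lt_of_lt_of_le one_pos (le_trans (le_max_left _ _) ht2)
    have hs0 : 0 < t*R := lt_of_lt_of_le one_pos (le_trans (le_max_right q 1) ht1)
    have hM0 : 0 < (μ (((t*R) • L)ᶜ)).toReal := hMpos _ hs0
    have hMle : (μ (((t*R) • L)ᶜ)).toReal ≤ K * Real.exp (-((1-ε/2)*φ (t*R))) := by
      have h3 := hKb (t*R) ht1
      have h4 := ENNReal.toReal_mono ENNReal.ofReal_ne_top h3
      rwa [ENNReal.toReal_ofReal (by positivity)] at h4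
    have hlog : Real.log (μ (((t*R) • L)ᶜ)).toReal ≤ Real.log K - (1-ε/2)*φ (t*R) := by
      calc Real.log (μ (((t*R) • L)ᶜ)).toReal
          ≤ Real.log (K * Real.exp (-((1-ε/2)*φ (t*R)))) := Real.log_le_log hM0 hMle
        _ = Real.log K + -((1-ε/2)*φ (t*R)) := by
            rw [Real.log_mul hK.ne' (Real.exp_ne_zero _), Real.log_exp]
        _ = Real.log K - (1-ε/2)*φ (t*R) := by ring
    have h5 : Real.log K ≤ (ε/2) * φ (t*R) := by
      have h6 : 2*|Real.log K|/ε ≤ φ (t*R) := le_trans (le_max_right _ _) ht2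
      rw [div_le_iff₀ hε] at h6
      linarith [le_abs_self (Real.log K)]
    rw [div_le_iff₀ hφpos]
    nlinarith
  -- Part B
  have hB : ∀ ε : ℝ, 0 < ε → ε < 1 → ∀ t₀ : ℝ, ∃ t : ℝ, t₀ ≤ t ∧
      -1 - ε ≤ Real.log (μ ((t * R) • L)ᶜ).toReal / φ (t * R) := by
    intro ε hε hε1 t₀
    set ε' : ℝ := ε/(2*((n:ℝ)+2)) with hε'_def
    have hn0 : (0:ℝ) ≤ n := Nat.cast_nonneg n
    have hε' : 0 < ε' := by positivity
    set B : ℝ := max 1 (2*|Real.log V|/ε) with hB_def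
    obtain ⟨w, hw⟩ := eventually_atTop.1 (hφtop.eventually_ge_atTop B)
    obtain ⟨s, hs₀, hs0', hkey⟩ := freq13 φ hmono hφtop hε' (max (max (t₀*R) w) 1)
    set δ : ℝ := Real.exp (-(ε' * φ s)) with hδ_def
    have hs1 : (1:ℝ) ≤ s := le_trans (le_max_right _ _) hs₀
    have hspos : 0 < s := lt_of_lt_of_le one_pos hs1
    have hsw : B ≤ φ s := hw s (le_trans (le_trans (le_max_right _ _) (le_max_left _ _)) hs₀)
    have hφs1 : 1 ≤ φ s := le_trans (le_max_left _ _) hsw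
    have hδ0 : 0 < δ := Real.exp_pos _
    have hlogδ : Real.log δ = -(ε' * φ s) := Real.log_exp _
    have hlow : Real.exp (-(φ (s+δ))) * δ^n * V ≤ (μ ((s • L)ᶜ)).toReal := by
      have h7 := hann s δ hspos hδ0
      have h8 := ENNReal.toReal_mono (hne_top s) h7
      rwa [ENNReal.toReal_mul, ENNReal.toReal_ofReal (by positivity)] at h8
    have hM0 : 0 < (μ ((s • L)ᶜ)).toReal := hMpos s hspos
    have hlog : -(φ (s+δ)) + (n:ℝ) * Real.log δ + Real.log V
        ≤ Real.log (μ ((s • L)ᶜ)).toReal := by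
      have h9 := Real.log_le_log (by positivity) hlow
      rw [Real.log_mul (by positivity) hV.ne',
        Real.log_mul (Real.exp_ne_zero _) (pow_ne_zero _ hδ0.ne'),
        Real.log_exp, Real.log_pow] at h9
      linarith
    have h10 : ((n:ℝ)+1) * ε' ≤ ε/2 := by
      have h : ε' * (2*((n:ℝ)+2)) = ε := by rw [hε'_def]; field_simp
      nlinarith [hε'.le]
    have h12 : -Real.log V ≤ (ε/2) * φ s := by
      have h14 : 2*|Real.log V|/ε ≤ φ s := le_trans (le_max_right _ _) hsw
      rw [div_le_iff₀ hε] at h14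
      linarith [neg_le_abs (Real.log V)]
    have h15 : ((n:ℝ)+1) * ε' * φ s ≤ (ε/2) * φ s :=
      mul_le_mul_of_nonneg_right h10 (by linarith)
    rw [hlogδ] at hlog
    have hfinal : -(1+ε) * φ s ≤ Real.log (μ ((s • L)ᶜ)).toReal := by
      nlinarith [hlog, hkey, h12, h15]
    refine ⟨s/R, ?_, ?_⟩
    · rw [le_div_iff₀ hR]
      exact le_trans (le_trans (le_max_left _ _) (le_max_left _ _)) hs₀
    · rw [div_mul_cancel₀ _ hR.ne']
      have hφpos : 0 < φ s := lt_of_lt_of_le one_pos hφs1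
      rw [le_div_iff₀ hφpos]
      nlinarith [hfinal]
  -- conclusion
  rw [Filter.limsup_eq]
  set S := {a' : ℝ | ∀ᶠ t in atTop,
    Real.log (μ ((t * R) • L)ᶜ).toReal / φ (t * R) ≤ a'} with hS
  have hbdd : BddBelow S := by
    refine ⟨-2, fun b hb => ?_⟩
    obtain ⟨t₁, ht₁⟩ := eventually_atTop.1 hb
    obtain ⟨t, htt, hFt⟩ := hB (1/2) (by norm_num) (by norm_num) t₁
    have := ht₁ t htt
    linarith
  have hne : S.Nonempty := ⟨-1 + 1/2, hA (1/2) (by norm_num) (by norm_num)⟩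
  apply le_antisymm
  · by_contra hlt
    push_neg at hlt
    set ε : ℝ := min (1/2) ((sInf S + 1)/2) with hε_def
    have hε : 0 < ε := lt_min (by norm_num) (by linarith)
    have hε1 : ε < 1 := lt_of_le_of_lt (min_le_left _ _) (by norm_num)
    have h1 : sInf S ≤ -1 + ε := csInf_le hbdd (hA ε hε hε1)
    have h2 : ε ≤ (sInf S + 1)/2 := min_le_right _ _
    linarith
  · apply le_csInf hne
    intro b hb
    by_contra hblt
    push_neg at hblt
    set ε : ℝ := min (1/2) ((-1 - b)/2) with hε_def
    have hε : 0 < ε := lt_min (by norm_num) (by linarith)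
    have hε1 : ε < 1 := lt_of_le_of_lt (min_le_left _ _) (by norm_num)
    obtain ⟨t₁, ht₁⟩ := eventually_atTop.1 hb
    obtain ⟨t, htt, hFt⟩ := hB ε hε hε1 t₁
    have h := ht₁ t htt
    have h2 : ε ≤ (-1 - b)/2 := min_le_right _ _
    linarith
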